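/- For b ≥ 1 let u = sqrt( b·sqrt(b²+8)/2 − b²/2 − 1 ) and let X be the two-point random variable with P(X = sqrt((1−u)/(1+u))) = (1+u)/2 and P(X = −sqrt((1+u)/(1−u))) = (1−u)/2. Then E X = 0, E X² = 1, E|X|³ = b, and |E X³| = A(b)·b, where A(b) = sqrt((1/2)sqrt(1+8/b²) + 1/2 − 2/b²). -/

import Mathlib

open MeasureTheory

set_option maxHeartbeats 1600000 in
lemma third_moment_extremal_aux (b u : ℝ) (hb : 1 ≤ b)
    (hu : u = Real.sqrt (b * Real.sqrt (b ^ 2 + 8) / 2 - b ^ 2 / 2 - 1)) :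
    0 ≤ (1 + u) / 2 ∧ 0 ≤ (1 - u) / 2 ∧
    0 ≤ Real.sqrt ((1 - u) / (1 + u)) ∧ 0 < Real.sqrt ((1 + u) / (1 - u)) ∧
    ((1+u)/2 * Real.sqrt ((1 - u) / (1 + u)) + (1-u)/2 * (-Real.sqrt ((1 + u) / (1 - u))) = 0) ∧
    ((1+u)/2 * (Real.sqrt ((1 - u) / (1 + u)))^2
      + (1-u)/2 * (-Real.sqrt ((1 + u) / (1 - u)))^2 = 1) ∧
    ((1+u)/2 * (Real.sqrt ((1 - u) / (1 + u)))^3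
      + (1-u)/2 * (Real.sqrt ((1 + u) / (1 - u)))^3 = b) ∧
    (|(1+u)/2 * (Real.sqrt ((1 - u) / (1 + u)))^3
      + (1-u)/2 * (-Real.sqrt ((1 + u) / (1 - u)))^3| =
      Real.sqrt ((1 / 2) * Real.sqrt (1 + 8 / b ^ 2) + 1 / 2 - 2 / b ^ 2) * b) := by
  have hb0 : (0:ℝ) < b := lt_of_lt_of_le one_pos hb
  obtain ⟨s, hsdef⟩ : ∃ s, s = Real.sqrt (b ^ 2 + 8) := ⟨_, rfl⟩
  rw [← hsdef] at hu
  have hs2 : s ^ 2 = b ^ 2 + 8 := hsdef ▸ Real.sq_sqrt (by positivity)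
  have hs0 : 0 < s := hsdef ▸ Real.sqrt_pos.mpr (by positivity)
  have hbs1 : b ^ 2 + 2 ≤ b * s := by
    nlinarith [mul_pos hb0 hs0, sq_nonneg (b*s - b^2 - 2), sq_nonneg (b*s + b^2 + 2)]
  have hbs2 : b * s < b ^ 2 + 4 := by nlinarith [mul_pos hb0 hs0]
  have hu2 : u ^ 2 = b * s / 2 - b ^ 2 / 2 - 1 := by
    rw [hu]; exact Real.sq_sqrt (by nlinarith)
  have hu0 : 0 ≤ u := hu ▸ Real.sqrt_nonneg _
  have hu1 : u < 1 := by nlinarith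
  obtain ⟨r, hrdef⟩ : ∃ r, r = Real.sqrt (1 - u) := ⟨_, rfl⟩
  obtain ⟨t, htdef⟩ : ∃ t, t = Real.sqrt (1 + u) := ⟨_, rfl⟩
  have hr2 : r ^ 2 = 1 - u := hrdef ▸ Real.sq_sqrt (by linarith)
  have ht2 : t ^ 2 = 1 + u := htdef ▸ Real.sq_sqrt (by linarith)
  have hr0 : 0 < r := hrdef ▸ Real.sqrt_pos.mpr (by linarith)
  have ht0 : 0 < t := htdef ▸ Real.sqrt_pos.mpr (by linarith)
  have hrne := hr0.ne'
  have htne := ht0.ne'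
  have hbne := hb0.ne'
  have h1u : 1 + u ^ 2 = b * (r * t) := by
    have hsq : (1 + u ^ 2) ^ 2 = (b * (r * t)) ^ 2 := by
      have : (b * (r*t))^2 = b^2 * (r^2 * t^2) := by ring
      rw [this, hr2, ht2]; nlinarith
    nlinarith [mul_pos hb0 (mul_pos hr0 ht0)]
  have ha : Real.sqrt ((1 - u) / (1 + u)) = r / t := by
    rw [hrdef, htdef]; exact Real.sqrt_div (by linarith) _
  have hc : Real.sqrt ((1 + u) / (1 - u)) = t / r := by
    rw [hrdef, htdef]; exact Real.sqrt_div (by linarith) _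
  rw [ha, hc]
  have hr4 : r^4 = (1-u)^2 := by rw [show r^4 = (r^2)^2 by ring, hr2]
  have ht4 : t^4 = (1+u)^2 := by rw [show t^4 = (t^2)^2 by ring, ht2]
  have hrt0 : 0 < r * t := mul_pos hr0 ht0
  have hrtne := hrt0.ne'
  refine ⟨by linarith, by linarith, by positivity, by positivity, ?_, ?_, ?_, ?_⟩
  · rw [← hr2, ← ht2]; field_simp; ring
  · have hv2 : (1+u)/2 * (r/t)^2 + (1-u)/2 * (-(t/r))^2 = r^2/2 + t^2/2 := by
      rw [← hr2, ← ht2]; field_simp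
    rw [hv2, hr2, ht2]; ring
  · have hv : (1+u)/2 * (r/t)^3 + (1-u)/2 * (t/r)^3 = (r^4 + t^4)/(2*(r*t)) := by
      rw [← hr2, ← ht2]; field_simp
    rw [hv, hr4, ht4, show (1-u)^2 + (1+u)^2 = 2*(1+u^2) by ring, h1u]
    field_simp
  · have hv : (1+u)/2 * (r/t)^3 + (1-u)/2 * (-(t/r))^3 = -(2*u/(r*t)) := by
      rw [show (1+u)/2 * (r/t)^3 + (1-u)/2 * (-(t/r))^3
            = -((t^4 - r^4)/(2*(r*t))) from by rw [← hr2, ← ht2]; field_simp; ring,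
        hr4, ht4, show (1+u)^2 - (1-u)^2 = 2*(2*u) by ring]
      field_simp
    rw [hv, abs_neg, abs_of_nonneg (by positivity)]
    have hsb : Real.sqrt (1 + 8 / b ^ 2) = s / b := by
      rw [show 1 + 8 / b ^ 2 = (s/b)^2 by field_simp; linarith]
      exact Real.sqrt_sq (by positivity)
    rw [hsb]
    have hwval : (1/2) * (s/b) + 1/2 - 2/b^2 = (b*s + b^2 - 4)/(2*b^2) := by
      field_simp; ring
    have hw0 : (0:ℝ) ≤ (1/2) * (s/b) + 1/2 - 2/b^2 := by
      rw [hwval]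
      apply div_nonneg (by nlinarith) (by positivity)
    have keysq : (2*u/(r*t))^2 = (Real.sqrt ((1/2) * (s/b) + 1/2 - 2/b^2) * b)^2 := by
      rw [mul_pow, Real.sq_sqrt hw0, hwval]
      have hrt2 : (r*t)^2 = 1 - u^2 := by rw [mul_pow, hr2, ht2]; ring
      rw [div_pow, hrt2]
      rw [div_mul_eq_mul_div, div_eq_div_iff (by nlinarith) (by positivity)]
      linear_combination ((b*s+b^2+4)*b^2) * hu2 + (b^4/2) * hs2
    have hnn1 : 0 ≤ 2*u/(r*t) := by positivity
    have hnn2 : 0 ≤ Real.sqrt ((1/2) * (s/b) + 1/2 - 2/b^2) * b := by positivity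
    rw [show 2*u/(r*t) = Real.sqrt ((2*u/(r*t))^2) from (Real.sqrt_sq hnn1).symm, keysq,
      Real.sqrt_sq hnn2]

lemma third_moment_two_point {Ω : Type*} [MeasurableSpace Ω] (μ : Measure Ω)
    [IsProbabilityMeasure μ] (X : Ω → ℝ) (hX : Measurable X) (a c p q : ℝ) (hpq : p + q = 1)
    (hp0 : 0 ≤ p) (hq0 : 0 ≤ q) (hane : a ≠ -c)
    (hp : μ {ω | X ω = a} = ENNReal.ofReal p)
    (hq : μ {ω | X ω = -c} = ENNReal.ofReal q)
    (f : ℝ → ℝ) :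
    (∫ ω, f (X ω) ∂μ) = p * f a + q * f (-c) := by
  set A := {ω | X ω = a} with hAdef
  set B := {ω | X ω = -c} with hBdef
  have hA : MeasurableSet A := hX (measurableSet_singleton a)
  have hB : MeasurableSet B := hX (measurableSet_singleton (-c))
  have hdisj : Disjoint A B := by
    rw [Set.disjoint_left]
    intro ω hω1 hω2
    exact hane (hω1 ▸ hω2)
  have hmAB : μ (A ∪ B) = 1 := by
    rw [measure_union hdisj hB, hp, hq, ← ENNReal.ofReal_add hp0 hq0, hpq,
      ENNReal.ofReal_one]
  have hnull : μ (A ∪ B)ᶜ = 0 := by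
    rw [measure_compl (hA.union hB) (measure_ne_top _ _), measure_univ, hmAB, tsub_self]
  have hmem : ∀ᵐ ω ∂μ, ω ∈ A ∪ B := by
    rw [ae_iff]
    convert hnull using 2
    rfl
  have hae : (fun ω => f (X ω)) =ᵐ[μ]
      (fun ω => A.indicator (fun _ => f a) ω + B.indicator (fun _ => f (-c)) ω) := by
    filter_upwards [hmem] with ω hω
    rcases hω with h | h
    · have hXa : X ω = a := h
      have hnB : ω ∉ B := fun h2 => hane (hXa ▸ h2)
      simp [Set.indicator_of_mem, h, Set.indicator_of_notMem hnB, hXa]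
    · have hXc : X ω = -c := h
      have hnA : ω ∉ A := fun h2 => hane (by rw [← h2, hXc])
      simp [Set.indicator_of_mem, h, Set.indicator_of_notMem hnA, hXc]
  rw [integral_congr_ae hae, integral_add ((integrable_const _).indicator hA)
    ((integrable_const _).indicator hB), integral_indicator_const _ hA,
    integral_indicator_const _ hB, measureReal_def, measureReal_def, hp, hq, ENNReal.toReal_ofReal hp0,
    ENNReal.toReal_ofReal hq0]
  simp [mul_comm]

theorem third_moment_extremal_distribution
    {Ω : Type*} [MeasurableSpace Ω] (μ : Measure Ω) [IsProbabilityMeasure μ]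
    (X : Ω → ℝ) (hX : Measurable X) (b u : ℝ) (hb : 1 ≤ b)
    (hu : u = Real.sqrt (b * Real.sqrt (b ^ 2 + 8) / 2 - b ^ 2 / 2 - 1))
    (hp : μ {ω | X ω = Real.sqrt ((1 - u) / (1 + u))} = ENNReal.ofReal ((1 + u) / 2))
    (hq : μ {ω | X ω = -Real.sqrt ((1 + u) / (1 - u))} = ENNReal.ofReal ((1 - u) / 2)) :
    (∫ ω, X ω ∂μ) = 0 ∧ (∫ ω, X ω ^ 2 ∂μ) = 1 ∧ (∫ ω, |X ω| ^ 3 ∂μ) = b ∧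
    |∫ ω, X ω ^ 3 ∂μ| =
      Real.sqrt ((1 / 2) * Real.sqrt (1 + 8 / b ^ 2) + 1 / 2 - 2 / b ^ 2) * b := by
  obtain ⟨hp0, hq0, ha0, hc0, e1, e2, e3, e4⟩ := third_moment_extremal_aux b u hb hu
  set a := Real.sqrt ((1 - u) / (1 + u)) with hadef
  set c := Real.sqrt ((1 + u) / (1 - u)) with hcdef
  have hane : a ≠ -c := by intro h; rw [h] at ha0; linarith
  have hpq : (1 + u) / 2 + (1 - u) / 2 = 1 := by ring
  have key := third_moment_two_point μ X hX a c _ _ hpq hp0 hq0 hane hp hq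
  have k1 : (∫ ω, X ω ∂μ) = (1+u)/2 * a + (1-u)/2 * (-c) := key (fun x => x)
  have k2 : (∫ ω, X ω ^ 2 ∂μ) = (1+u)/2 * a^2 + (1-u)/2 * (-c)^2 := key (fun x => x^2)
  have k3 : (∫ ω, |X ω| ^ 3 ∂μ) = (1+u)/2 * |a|^3 + (1-u)/2 * |(-c)|^3 := key (fun x => |x|^3)
  have k4 : (∫ ω, X ω ^ 3 ∂μ) = (1+u)/2 * a^3 + (1-u)/2 * (-c)^3 := key (fun x => x^3)
  refine ⟨by rw [k1]; exact e1, by rw [k2]; exact e2, ?_, by rw [k4]; exact e4⟩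
  rw [k3, abs_of_nonneg ha0, abs_neg, abs_of_nonneg hc0.le]
  simpa using e3
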